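/- Let Γ be a finitely generated group with a free normal subgroup Φ of finite index, and Δ ≤ Γ a finitely generated subgroup. Then for every finite-index normal subgroup U ⊴ Δ there exists a finite-index normal subgroup V ⊴ Γ with V ∩ Δ ≤ U. -/

import Mathlib

open Subgroup

private lemma fgMap {G H : Type*} [Group G] [Group H] {P : Subgroup G} (h : P.FG)
    (f : G →* H) : (P.map f).FG := by
  obtain ⟨S, hS, hfin⟩ := (Subgroup.fg_iff P).1 h
  exact (Subgroup.fg_iff _).2 ⟨f '' S, by rw [← MonoidHom.map_closure, hS], hfin.image f⟩

/-- **M. Hall's theorem** (weak form): if `D` is a finitely generated subgroup of a free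
group and `D` meets only finitely many left cosets of a subgroup `U`,
then there is a finite-index subgroup `W` with `W ⊓ D ≤ U`. -/
private lemma hall_free {α : Type*} (D U : Subgroup (FreeGroup α)) (hD : D.FG)
    (hfin : (Set.range fun d : D => ((d : FreeGroup α) : FreeGroup α ⧸ U)).Finite) :
    ∃ W : Subgroup (FreeGroup α), W.FiniteIndex ∧ W ⊓ D ≤ U := by
  classical
  obtain ⟨T, hT⟩ := hD
  -- the finite set of "partial products": suffixes of the words of generators
  set P : Set (FreeGroup α) :=
    insert 1 {p | ∃ t ∈ T, ∃ l : List (α × Bool),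
      l <:+ (t : FreeGroup α).toWord ∧ p = FreeGroup.mk l} with hP
  have hPfin : P.Finite := by
    refine Set.Finite.insert _ ?_
    have hsub : {p | ∃ t ∈ T, ∃ l : List (α × Bool),
        l <:+ (t : FreeGroup α).toWord ∧ p = FreeGroup.mk l}
        ⊆ ⋃ t ∈ (T : Set (FreeGroup α)),
            (fun n => FreeGroup.mk ((t.toWord).drop n)) '' Set.Iic t.toWord.length := by
      rintro p ⟨t, ht, l, ⟨s, hs⟩, rfl⟩
      refine Set.mem_biUnion ht ⟨s.length, ?_, ?_⟩
      · rw [← hs]; simp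
      · rw [← hs]
        show FreeGroup.mk (List.drop s.length (s ++ l)) = FreeGroup.mk l
        rw [List.drop_left]
    exact Set.Finite.subset
      (T.finite_toSet.biUnion fun t _ => (Set.finite_Iic _).image _) hsub
  have h1P : (1 : FreeGroup α) ∈ P := Set.mem_insert _ _
  -- the finite set of cosets
  set Y : Set (FreeGroup α ⧸ U) :=
    Set.image2 (fun p q => p • q) P
      (Set.range fun d : D => ((d : FreeGroup α) : FreeGroup α ⧸ U)) with hY
  have hYfin : Y.Finite := Set.Finite.image2 _ hPfin hfin
  have hmemY : ∀ p ∈ P, ∀ x, x ∈ D →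
      (QuotientGroup.mk (p * x) : FreeGroup α ⧸ U) ∈ Y := by
    intro p hp x hx
    exact ⟨p, hp, QuotientGroup.mk x, ⟨⟨x, hx⟩, rfl⟩, rfl⟩
  have memD : ∀ {x : FreeGroup α}, x ∈ D →
      (QuotientGroup.mk x : FreeGroup α ⧸ U) ∈ Y := by
    intro x hx
    simpa using hmemY 1 h1P x hx
  haveI : Finite Y := hYfin.to_subtype
  haveI : Fintype Y := Fintype.ofFinite _
  -- the permutations extending the partial left-translation by a letter
  let τ : α → Equiv.Perm Y := fun a =>
    Equiv.extendSubtype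
      (p := fun y : Y => FreeGroup.of a • (y : FreeGroup α ⧸ U) ∈ Y)
      (q := fun y : Y => (FreeGroup.of a)⁻¹ • (y : FreeGroup α ⧸ U) ∈ Y)
      { toFun := fun y => ⟨⟨FreeGroup.of a • ((y : Y) : FreeGroup α ⧸ U), y.2⟩, by
          simpa [inv_smul_smul] using (y : Y).2⟩
        invFun := fun y => ⟨⟨(FreeGroup.of a)⁻¹ • ((y : Y) : FreeGroup α ⧸ U), y.2⟩, by
          simpa [smul_inv_smul] using (y : Y).2⟩
        left_inv := by rintro ⟨⟨y, hy⟩, h⟩; ext; simp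
        right_inv := by rintro ⟨⟨y, hy⟩, h⟩; ext; simp }
  have key1 : ∀ (a : α) (y : Y) (h : FreeGroup.of a • (y : FreeGroup α ⧸ U) ∈ Y),
      τ a y = ⟨FreeGroup.of a • (y : FreeGroup α ⧸ U), h⟩ := by
    intro a y h
    rw [Equiv.extendSubtype_apply_of_mem _ y h]
    rfl
  set ρ : FreeGroup α →* Equiv.Perm Y := FreeGroup.lift τ with hρdef
  have hρof : ∀ a : α, ρ (FreeGroup.of a) = τ a := fun a => FreeGroup.lift_apply_of
  -- applying a single letter
  have letter : ∀ (a : α) (b : Bool) (z : FreeGroup α)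
      (hz : (QuotientGroup.mk z : FreeGroup α ⧸ U) ∈ Y)
      (hz' : (QuotientGroup.mk (FreeGroup.mk [(a, b)] * z) : FreeGroup α ⧸ U) ∈ Y),
      ρ (FreeGroup.mk [(a, b)]) ⟨QuotientGroup.mk z, hz⟩
        = ⟨QuotientGroup.mk (FreeGroup.mk [(a, b)] * z), hz'⟩ := by
    intro a b z hz hz'
    cases b
    · -- inverse letter
      have e2 : FreeGroup.mk [(a, false)] = (FreeGroup.of a)⁻¹ := by
        rw [FreeGroup.of, FreeGroup.inv_mk]; rfl
      have hz'' : (QuotientGroup.mk ((FreeGroup.of a)⁻¹ * z) : FreeGroup α ⧸ U) ∈ Y := by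
        rw [← e2]; exact hz'
      have hmem : FreeGroup.of a •
          ((⟨QuotientGroup.mk ((FreeGroup.of a)⁻¹ * z), hz''⟩ : Y) : FreeGroup α ⧸ U) ∈ Y := by
        show FreeGroup.of a •
          (QuotientGroup.mk ((FreeGroup.of a)⁻¹ * z) : FreeGroup α ⧸ U) ∈ Y
        rw [MulAction.Quotient.smul_mk, smul_eq_mul, mul_inv_cancel_left]
        exact hz
      have h2 : τ a ⟨QuotientGroup.mk ((FreeGroup.of a)⁻¹ * z), hz''⟩
          = ⟨QuotientGroup.mk z, hz⟩ := by
        rw [key1 a _ hmem]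
        refine Subtype.ext ?_
        show FreeGroup.of a •
          (QuotientGroup.mk ((FreeGroup.of a)⁻¹ * z) : FreeGroup α ⧸ U)
            = QuotientGroup.mk z
        rw [MulAction.Quotient.smul_mk, smul_eq_mul, mul_inv_cancel_left]
      have hstep : ρ (FreeGroup.mk [(a, false)]) = (τ a)⁻¹ := by
        rw [e2, map_inv, hρof]
      rw [hstep, ← h2, ← Equiv.Perm.mul_apply, inv_mul_cancel, Equiv.Perm.one_apply]
      refine Subtype.ext ?_
      show (QuotientGroup.mk ((FreeGroup.of a)⁻¹ * z) : FreeGroup α ⧸ U)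
        = QuotientGroup.mk (FreeGroup.mk [(a, false)] * z)
      rw [e2]
    · -- positive letter
      have hmem : FreeGroup.of a •
          ((⟨QuotientGroup.mk z, hz⟩ : Y) : FreeGroup α ⧸ U) ∈ Y := by
        show FreeGroup.of a • (QuotientGroup.mk z : FreeGroup α ⧸ U) ∈ Y
        rw [MulAction.Quotient.smul_mk]
        exact hz'
      have hstep : ρ (FreeGroup.mk [(a, true)]) = τ a := by
        rw [show FreeGroup.mk [(a, true)] = FreeGroup.of a from rfl, hρof]
      rw [hstep, key1 a _ hmem]
      refine Subtype.ext ?_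
      show FreeGroup.of a • (QuotientGroup.mk z : FreeGroup α ⧸ U)
        = QuotientGroup.mk (FreeGroup.mk [(a, true)] * z)
      rw [MulAction.Quotient.smul_mk, smul_eq_mul]
      rfl
  -- applying a whole word, provided all partial products stay inside `Y`
  have word : ∀ (l : List (α × Bool)) (z : FreeGroup α),
      (∀ l', l' <:+ l → (QuotientGroup.mk (FreeGroup.mk l' * z) : FreeGroup α ⧸ U) ∈ Y) →
      ∀ (hz : (QuotientGroup.mk z : FreeGroup α ⧸ U) ∈ Y)
        (hz' : (QuotientGroup.mk (FreeGroup.mk l * z) : FreeGroup α ⧸ U) ∈ Y),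
      ρ (FreeGroup.mk l) ⟨QuotientGroup.mk z, hz⟩
        = ⟨QuotientGroup.mk (FreeGroup.mk l * z), hz'⟩ := by
    intro l
    induction l with
    | nil =>
      intro z hall hz hz'
      have h0 : ρ (FreeGroup.mk ([] : List (α × Bool))) = 1 := by
        rw [show FreeGroup.mk ([] : List (α × Bool)) = 1 from rfl, map_one]
      rw [h0]
      refine Subtype.ext ?_
      show (QuotientGroup.mk z : FreeGroup α ⧸ U)
        = QuotientGroup.mk (FreeGroup.mk ([] : List (α × Bool)) * z)
      rw [show FreeGroup.mk ([] : List (α × Bool)) = 1 from rfl, one_mul]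
    | cons hd tl ih =>
      intro z hall hz hz'
      obtain ⟨a, b⟩ := hd
      have h1 : FreeGroup.mk ((a, b) :: tl) = FreeGroup.mk [(a, b)] * FreeGroup.mk tl := by
        rw [FreeGroup.mul_mk]
        rfl
      have hmid : (QuotientGroup.mk (FreeGroup.mk tl * z) : FreeGroup α ⧸ U) ∈ Y :=
        hall tl (List.suffix_cons (a, b) tl)
      have hfin' : (QuotientGroup.mk (FreeGroup.mk [(a, b)] * (FreeGroup.mk tl * z)) :
          FreeGroup α ⧸ U) ∈ Y := by
        rw [← mul_assoc, ← h1]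
        exact hall ((a, b) :: tl) (List.suffix_refl _)
      have htl := ih z (fun l' h => hall l' (h.trans (List.suffix_cons (a, b) tl))) hz hmid
      have hsplit : ρ (FreeGroup.mk ((a, b) :: tl))
          = ρ (FreeGroup.mk [(a, b)]) * ρ (FreeGroup.mk tl) := by
        rw [h1, map_mul]
      rw [hsplit, Equiv.Perm.mul_apply, htl, letter a b (FreeGroup.mk tl * z) hmid hfin']
      refine Subtype.ext ?_
      show (QuotientGroup.mk (FreeGroup.mk [(a, b)] * (FreeGroup.mk tl * z)) :
          FreeGroup α ⧸ U)
        = QuotientGroup.mk (FreeGroup.mk ((a, b) :: tl) * z)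
      rw [← mul_assoc, ← h1]
  -- applying a generator of `D`
  have gen : ∀ t, t ∈ T → ∀ x, x ∈ D →
      ∀ (hm : (QuotientGroup.mk x : FreeGroup α ⧸ U) ∈ Y)
        (hm' : (QuotientGroup.mk (t * x) : FreeGroup α ⧸ U) ∈ Y),
      ρ t ⟨QuotientGroup.mk x, hm⟩ = ⟨QuotientGroup.mk (t * x), hm'⟩ := by
    intro t ht x hx hm hm'
    have hall : ∀ l', l' <:+ (t : FreeGroup α).toWord →
        (QuotientGroup.mk (FreeGroup.mk l' * x) : FreeGroup α ⧸ U) ∈ Y := by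
      intro l' hsuf
      exact hmemY (FreeGroup.mk l') (Set.mem_insert_iff.mpr
        (Or.inr ⟨t, ht, l', hsuf, rfl⟩)) x hx
    have hz' : (QuotientGroup.mk (FreeGroup.mk (t : FreeGroup α).toWord * x) :
        FreeGroup α ⧸ U) ∈ Y := by
      rw [FreeGroup.mk_toWord]; exact hm'
    have h1 : ρ ((t : FreeGroup α)) = ρ (FreeGroup.mk (t : FreeGroup α).toWord) := by
      rw [FreeGroup.mk_toWord]
    rw [h1, word (t : FreeGroup α).toWord x hall hm hz']
    refine Subtype.ext ?_
    show (QuotientGroup.mk (FreeGroup.mk (t : FreeGroup α).toWord * x) : FreeGroup α ⧸ U)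
      = QuotientGroup.mk ((t : FreeGroup α) * x)
    rw [FreeGroup.mk_toWord]
  -- applying any element of `D`
  have main : ∀ d, d ∈ D → ∀ x, x ∈ D →
      ∀ (hm : (QuotientGroup.mk x : FreeGroup α ⧸ U) ∈ Y)
        (hm' : (QuotientGroup.mk (d * x) : FreeGroup α ⧸ U) ∈ Y),
      ρ d ⟨QuotientGroup.mk x, hm⟩ = ⟨QuotientGroup.mk (d * x), hm'⟩ := by
    intro d hd
    rw [← hT] at hd
    induction hd using Subgroup.closure_induction with
    | mem t ht => exact fun x hx hm hm' => gen t ht x hx hm hm'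
    | one =>
      intro x hx hm hm'
      rw [map_one]
      refine Subtype.ext ?_
      show (QuotientGroup.mk x : FreeGroup α ⧸ U) = QuotientGroup.mk (1 * x)
      rw [one_mul]
    | mul g₁ g₂ hg₁ hg₂ ih₁ ih₂ =>
      intro x hx hm hm'
      have hg₂D : g₂ ∈ D := hT ▸ hg₂
      have hg₁D : g₁ ∈ D := hT ▸ hg₁
      have hmid : (QuotientGroup.mk (g₂ * x) : FreeGroup α ⧸ U) ∈ Y :=
        memD (mul_mem hg₂D hx)
      have h2 := ih₂ x hx hm hmid
      have hml : (QuotientGroup.mk (g₁ * (g₂ * x)) : FreeGroup α ⧸ U) ∈ Y := by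
        rw [← mul_assoc]; exact hm'
      have h1 := ih₁ (g₂ * x) (mul_mem hg₂D hx) hmid hml
      rw [map_mul, Equiv.Perm.mul_apply, h2, h1]
      refine Subtype.ext ?_
      show (QuotientGroup.mk (g₁ * (g₂ * x)) : FreeGroup α ⧸ U)
        = QuotientGroup.mk (g₁ * g₂ * x)
      rw [mul_assoc]
    | inv g hg ih =>
      intro x hx hm hm'
      have hgD : g ∈ D := hT ▸ hg
      have hixD : g⁻¹ * x ∈ D := mul_mem (inv_mem hgD) hx
      have h := ih (g⁻¹ * x) hixD hm' (by rw [mul_inv_cancel_left]; exact hm)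
      have h' : ρ g ⟨QuotientGroup.mk (g⁻¹ * x), hm'⟩ = ⟨QuotientGroup.mk x, hm⟩ := by
        rw [h]
        refine Subtype.ext ?_
        show (QuotientGroup.mk (g * (g⁻¹ * x)) : FreeGroup α ⧸ U) = QuotientGroup.mk x
        rw [mul_inv_cancel_left]
      rw [map_inv, ← h', ← Equiv.Perm.mul_apply, inv_mul_cancel, Equiv.Perm.one_apply]
  refine ⟨ρ.ker, ?_, ?_⟩
  · constructor
    rw [Subgroup.index_ker]
    haveI : Finite (Equiv.Perm Y) := inferInstance
    exact Nat.card_ne_zero.mpr ⟨⟨1, one_mem _⟩, Subtype.finite⟩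
  · rintro d ⟨hker, hd⟩
    have hk : ρ d = 1 := hker
    have := main d hd 1 (one_mem D) (memD (one_mem D)) (by rw [mul_one]; exact memD hd)
    rw [hk] at this
    have hval : (QuotientGroup.mk (1 : FreeGroup α) : FreeGroup α ⧸ U)
        = QuotientGroup.mk (d * 1) := congrArg Subtype.val this
    rw [mul_one] at hval
    have := QuotientGroup.eq.mp hval.symm
    simpa using this

/-- Hall's theorem transferred to an abstract free group. -/
private lemma hall_isFree {G : Type*} [Group G] (hG : IsFreeGroup G)
    (D U : Subgroup G) (hD : D.FG)
    (hfin : (Set.range fun d : D => ((d : G) : G ⧸ U)).Finite) :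
    ∃ W : Subgroup G, W.FiniteIndex ∧ W ⊓ D ≤ U := by
  haveI := hG
  classical
  set e : G ≃* FreeGroup (IsFreeGroup.Generators G) := IsFreeGroup.toFreeGroup G with he
  set D' : Subgroup (FreeGroup (IsFreeGroup.Generators G)) := D.map e.toMonoidHom with hD'
  set U' : Subgroup (FreeGroup (IsFreeGroup.Generators G)) := U.map e.toMonoidHom with hU'
  have hD'fg : D'.FG := fgMap hD e.toMonoidHom
  -- transfer the coset map
  let q : G ⧸ U → FreeGroup (IsFreeGroup.Generators G) ⧸ U' :=
    Quotient.map' e (fun a b hab => by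
      refine QuotientGroup.leftRel_apply.mpr ?_
      have h1 := QuotientGroup.leftRel_apply.mp hab
      have h2 : e.toMonoidHom (a⁻¹ * b) ∈ U' := Subgroup.mem_map_of_mem _ h1
      simpa [map_mul, map_inv] using h2)
  have hq : ∀ x : G, q (QuotientGroup.mk x) = QuotientGroup.mk (e x) := fun x => rfl
  have hfin' : (Set.range fun d : D' =>
      ((d : FreeGroup (IsFreeGroup.Generators G)) :
        FreeGroup (IsFreeGroup.Generators G) ⧸ U')).Finite := by
    refine Set.Finite.subset (hfin.image q) ?_
    rintro _ ⟨d', rfl⟩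
    obtain ⟨x, hx, hex⟩ := d'.2
    refine ⟨QuotientGroup.mk x, ⟨⟨x, hx⟩, rfl⟩, ?_⟩
    exact congrArg QuotientGroup.mk hex
  obtain ⟨W', hW'fi, hW'le⟩ := hall_free D' U' hD'fg hfin'
  refine ⟨W'.comap e.toMonoidHom, ?_, ?_⟩
  · constructor
    rw [Subgroup.index_comap_of_surjective _ e.surjective]
    exact hW'fi.index_ne_zero
  · rintro x ⟨hxW, hxD⟩
    have h1 : e x ∈ W' := hxW
    have h2 : e x ∈ D' := Subgroup.mem_map_of_mem _ hxD
    have h3 : e x ∈ U' := hW'le ⟨h1, h2⟩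
    rwa [hU', Subgroup.mem_map_equiv, MulEquiv.symm_apply_apply] at h3

/-- Let `Γ` be a finitely generated group with a free normal subgroup `Φ` of finite index,
and `Δ ≤ Γ` a finitely generated subgroup. Then for every finite-index normal subgroup
`U ⊴ Δ` there is a finite-index normal subgroup `V ⊴ Γ` with `V ∩ Δ ≤ U`. -/
theorem virtuallyFree_induced_profinite_topology {Γ : Type*} [Group Γ] [Group.FG Γ]
    (Φ : Subgroup Γ) (hΦfree : IsFreeGroup Φ) (hΦn : Φ.Normal) (hΦf : Φ.FiniteIndex)
    (Δ : Subgroup Γ) (hΔ : Δ.FG)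
    (U : Subgroup Δ) (hUn : U.Normal) (hUf : U.FiniteIndex) :
    ∃ V : Subgroup Γ, V.Normal ∧ V.FiniteIndex ∧ V.subgroupOf Δ ≤ U := by
  classical
  haveI := hΦn
  haveI := hΦf
  haveI := hUf
  set Umap : Subgroup Γ := U.map Δ.subtype with hUmap
  set Din : Subgroup ↥Φ := (Δ ⊓ Φ).subgroupOf Φ with hDin
  set Uin : Subgroup ↥Φ := Umap.subgroupOf Φ with hUin
  -- `Δ ⊓ Φ` is finitely generated
  haveI hfgΔ : Group.FG ↥Δ := (Group.fg_iff_subgroup_fg Δ).mpr hΔ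
  haveI hrel : (Φ.subgroupOf Δ).FiniteIndex := by
    constructor
    intro h0
    have hdvd : Φ.relIndex Δ ∣ Φ.index := Subgroup.relIndex_dvd_index_of_normal Φ Δ
    have : Φ.relIndex Δ = 0 := h0
    exact hΦf.index_ne_zero (zero_dvd_iff.mp (this ▸ hdvd))
  have h1 : (Φ.subgroupOf Δ).FG :=
    (Group.fg_iff_subgroup_fg _).mp (Subgroup.fg_of_index_ne_zero _)
  have h2 : (Δ ⊓ Φ).FG := by
    have := fgMap h1 Δ.subtype
    rw [Subgroup.subgroupOf_map_subtype] at this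
    rwa [inf_comm] at this
  have hDinFG : Din.FG := by
    have hle : Δ ⊓ Φ ≤ Φ := inf_le_right
    have e1 : ↥(Δ ⊓ Φ) ≃* ↥Din := (Subgroup.subgroupOfEquivOfLe hle).symm
    haveI : Group.FG ↥(Δ ⊓ Φ) := (Group.fg_iff_subgroup_fg _).mpr h2
    haveI : Group.FG ↥Din := Group.fg_of_surjective (f := e1.toMonoidHom) e1.surjective
    exact (Group.fg_iff_subgroup_fg _).mp this
  -- finiteness of the cosets of `Uin` met by `Din`
  have hUrel : Umap.relIndex Δ ≠ 0 := by
    have : Umap.subgroupOf Δ = U := Subgroup.comap_map_eq_self_of_injective Δ.subtype_injective U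
    show (Umap.subgroupOf Δ).index ≠ 0
    rw [this]
    exact hUf.index_ne_zero
  have hUrel2 : Umap.relIndex (Δ ⊓ Φ) ≠ 0 := by
    intro h0
    exact hUrel (Subgroup.relIndex_eq_zero_of_le_right inf_le_left h0)
  have hUDin : (Uin.subgroupOf Din).index ≠ 0 := by
    have : (Uin.subgroupOf Din).index = Umap.relIndex (Δ ⊓ Φ) := by
      rw [hUin, hDin]
      exact Subgroup.relIndex_subgroupOf inf_le_right
    rw [this]
    exact hUrel2
  haveI : (Uin.subgroupOf Din).FiniteIndex := ⟨hUDin⟩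
  haveI : Finite (↥Din ⧸ (Uin.subgroupOf Din)) := Subgroup.finite_quotient_of_finiteIndex
  have hfin : (Set.range fun d : Din => ((d : ↥Φ) : ↥Φ ⧸ Uin)).Finite := by
    let f : (↥Din ⧸ (Uin.subgroupOf Din)) → (↥Φ ⧸ Uin) :=
      Quotient.map' (fun d => (d : ↥Φ)) (fun a b hab => by
        have h1 := QuotientGroup.leftRel_apply.mp hab
        have h2 : ((a⁻¹ * b : ↥Din) : ↥Φ) ∈ Uin := h1
        refine QuotientGroup.leftRel_apply.mpr ?_
        simpa using h2)
    have hsub : (Set.range fun d : Din => ((d : ↥Φ) : ↥Φ ⧸ Uin)) ⊆ Set.range f := by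
      rintro _ ⟨d, rfl⟩
      exact ⟨QuotientGroup.mk d, rfl⟩
    exact (Set.finite_range f).subset hsub
  obtain ⟨W, hWfi, hWle⟩ := hall_isFree hΦfree Din Uin hDinFG hfin
  set WΓ : Subgroup Γ := W.map Φ.subtype with hWΓ
  haveI hWΓfi : WΓ.FiniteIndex := by
    constructor
    rw [hWΓ, Subgroup.index_map_subtype]
    exact Nat.mul_ne_zero hWfi.index_ne_zero hΦf.index_ne_zero
  refine ⟨WΓ.normalCore, Subgroup.normalCore_normal _, inferInstance, ?_⟩
  intro x hx
  have hx' : (x : Γ) ∈ WΓ := WΓ.normalCore_le hx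
  have hxΦ : (x : Γ) ∈ Φ := Subgroup.map_subtype_le W hx'
  have hxW : (⟨(x : Γ), hxΦ⟩ : ↥Φ) ∈ W := by
    obtain ⟨w, hw, hwx⟩ := hx'
    have : w = (⟨(x : Γ), hxΦ⟩ : ↥Φ) := Subtype.ext hwx
    rwa [this] at hw
  have hxDin : (⟨(x : Γ), hxΦ⟩ : ↥Φ) ∈ Din := by
    show (x : Γ) ∈ Δ ⊓ Φ
    exact ⟨x.2, hxΦ⟩
  have hxUin : (⟨(x : Γ), hxΦ⟩ : ↥Φ) ∈ Uin := hWle ⟨hxW, hxDin⟩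
  have hxUmap : (x : Γ) ∈ Umap := hxUin
  obtain ⟨u, hu, hux⟩ := hxUmap
  have : u = x := Subtype.ext hux
  rwa [this] at hu
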